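/- If a and b are positive integers with a ≠ b, then a⁴ - b⁴ is not a perfect square (assuming a > b). -/

import Mathlib

private lemma natAbs_lt_of_sq_lt {a x : ℤ} (h : a ^ 2 < x ^ 2) : a.natAbs < x.natAbs := by
  rcases le_or_gt x.natAbs a.natAbs with h' | h'
  · exfalso
    have h1 : (x.natAbs : ℤ) ≤ (a.natAbs : ℤ) := by exact_mod_cast h'
    have h2 : (a.natAbs : ℤ) ^ 2 = a ^ 2 := Int.natAbs_sq a
    have h3 : (x.natAbs : ℤ) ^ 2 = x ^ 2 := Int.natAbs_sq x
    nlinarith [Int.natCast_nonneg x.natAbs]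
  · exact h'

private lemma sq_of_coprime_pos {a b c : ℤ} (h : IsCoprime a b) (heq : a * b = c ^ 2)
    (ha : 0 < a) : ∃ u : ℤ, 0 < u ∧ a = u ^ 2 := by
  obtain ⟨u, hu | hu⟩ := Int.sq_of_isCoprime h heq
  · refine ⟨|u|, ?_, by rw [sq_abs]; exact hu⟩
    have : u ≠ 0 := by rintro rfl; simp at hu; omega
    positivity
  · exfalso
    nlinarith [sq_nonneg u]

private lemma even_case_helper (p q x : ℤ) (hx : 0 < x) (hp2 : p % 2 = 1)
    (hcop : Int.gcd p q = 1) (ht : PythagoreanTriple p q x)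
    (hq : ∃ v : ℤ, q = 2 * v ^ 2) (hq0 : q ≠ 0) (hpsq : ∃ u : ℤ, p = u ^ 2) :
    ∃ r s w : ℤ, 0 < r ∧ 0 < s ∧ w ≠ 0 ∧ r ^ 4 = s ^ 4 + w ^ 2 ∧ r.natAbs < x.natAbs := by
  obtain ⟨M, N, hP, hQ, hX, hMN, _hpar, hM0⟩ :=
    PythagoreanTriple.coprime_classification' ht hcop hp2 hx
  obtain ⟨v, hv⟩ := hq
  obtain ⟨u, hu⟩ := hpsq
  have hMNv : M * N = v ^ 2 := by linarith [hQ.symm.trans hv]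
  have hv0 : v ≠ 0 := by rintro rfl; rw [hv] at hq0; simp at hq0
  have hMNpos : 0 < M * N := by rw [hMNv]; exact sq_pos_of_ne_zero hv0
  have hMpos : 0 < M := by
    rcases hM0.lt_or_eq with h | h
    · exact h
    · exfalso; rw [← h] at hMNpos; simp at hMNpos
  have hNpos : 0 < N := by nlinarith
  have hcMN : IsCoprime M N := Int.isCoprime_iff_gcd_eq_one.mpr hMN
  obtain ⟨r, hrpos, hr⟩ := sq_of_coprime_pos hcMN hMNv hMpos
  obtain ⟨s, hspos, hs⟩ :=
    sq_of_coprime_pos hcMN.symm (by linarith [hMNv] : N * M = v ^ 2) hNpos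
  have hu0 : u ≠ 0 := by rintro rfl; rw [hu] at hp2; norm_num at hp2
  refine ⟨r, s, u, hrpos, hspos, hu0, ?_, ?_⟩
  · rw [hu] at hP
    have : r ^ 4 = M ^ 2 := by rw [hr]; ring
    have hs4 : s ^ 4 = N ^ 2 := by rw [hs]; ring
    linarith
  · apply natAbs_lt_of_sq_lt
    nlinarith [sq_nonneg N]

private lemma descent :
    ∀ n : ℕ, ∀ x y z : ℤ, x.natAbs = n → 0 < x → 0 < y → z ≠ 0 →
      x ^ 4 = y ^ 4 + z ^ 2 → False := by
  intro n
  induction n using Nat.strong_induction_on with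
  | _ n ih =>
  intro x y z hxn hx hy hz heq
  subst hxn
  by_cases hg : Int.gcd x y = 1
  case neg =>
    -- reduce to a coprime solution
    set g : ℤ := (Int.gcd x y : ℤ) with hgdef
    have hgn : 2 ≤ Int.gcd x y := by
      have := Int.gcd_pos_of_ne_zero_left y hx.ne'
      omega
    have hgpos : 0 < g := by rw [hgdef]; exact_mod_cast Nat.lt_of_lt_of_le Nat.zero_lt_two hgn
    have hg2 : 2 ≤ g := by rw [hgdef]; exact_mod_cast hgn
    obtain ⟨x1, hx1⟩ : g ∣ x := Int.gcd_dvd_left x y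
    obtain ⟨y1, hy1⟩ : g ∣ y := Int.gcd_dvd_right x y
    have hzdvd : g ^ 2 ∣ z := by
      rw [← Int.pow_dvd_pow_iff (two_ne_zero), ← pow_mul]
      refine ⟨x1 ^ 4 - y1 ^ 4, ?_⟩
      have : z ^ 2 = x ^ 4 - y ^ 4 := by linarith
      rw [this, hx1, hy1]; ring
    obtain ⟨z1, hz1⟩ := hzdvd
    have heq1 : x1 ^ 4 = y1 ^ 4 + z1 ^ 2 := by
      have h4 : g ^ 4 * x1 ^ 4 = g ^ 4 * (y1 ^ 4 + z1 ^ 2) := by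
        rw [hx1, hy1, hz1] at heq
        linear_combination heq
      exact mul_left_cancel₀ (by positivity) h4
    have hx1pos : 0 < x1 := by
      rcases lt_trichotomy 0 x1 with h | h | h
      · exact h
      · exfalso; rw [hx1, ← h] at hx; simp at hx
      · exfalso; nlinarith [hx1 ▸ hx]
    have hy1pos : 0 < y1 := by
      rcases lt_trichotomy 0 y1 with h | h | h
      · exact h
      · exfalso; rw [hy1, ← h] at hy; simp at hy
      · exfalso; nlinarith [hy1 ▸ hy]
    have hz1 : z1 ≠ 0 := by rintro rfl; simp at hz1; exact hz hz1
    refine ih x1.natAbs ?_ x1 y1 z1 rfl hx1pos hy1pos hz1 heq1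
    apply natAbs_lt_of_sq_lt
    rw [hx1]
    have h1 : (2:ℤ) * x1 ^ 2 ≤ g * x1 ^ 2 := mul_le_mul_of_nonneg_right hg2 (sq_nonneg x1)
    have h2 : (2:ℤ) * (g * x1 ^ 2) ≤ g * (g * x1 ^ 2) :=
      mul_le_mul_of_nonneg_right hg2 (by positivity)
    have h3 : (0:ℤ) < x1 ^ 2 := by positivity
    nlinarith
  case pos =>
    have hxy : IsCoprime x y := Int.isCoprime_iff_gcd_eq_one.mpr hg
    rcases Int.emod_two_eq_zero_or_one y with hy2 | hy2
    · -- y even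
      have hx2 : x % 2 = 1 := by
        rcases Int.emod_two_eq_zero_or_one x with h | h
        · exfalso
          have h2 : IsUnit (2 : ℤ) :=
            hxy.isUnit_of_dvd' (Int.dvd_of_emod_eq_zero h) (Int.dvd_of_emod_eq_zero hy2)
          rw [Int.isUnit_iff] at h2
          omega
        · exact h
      have hzodd : z % 2 = 1 := by
        have hodd : Odd (z ^ 2) := by
          have h1 : Odd (x ^ 4) := (Int.odd_iff.mpr hx2).pow
          have h2 : Even (y ^ 4) := by
            rw [Int.even_pow]
            exact ⟨Int.even_iff.mpr hy2, by norm_num⟩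
          have : z ^ 2 = x ^ 4 - y ^ 4 := by linarith
          rw [this]
          exact h1.sub_even h2
        rw [Int.odd_pow] at hodd
        rcases hodd with h | h
        · exact Int.odd_iff.mp h
        · norm_num at h
      have ht : PythagoreanTriple z (y ^ 2) (x ^ 2) := by
        show z * z + y ^ 2 * y ^ 2 = x ^ 2 * x ^ 2
        linear_combination -heq
      have hcop : Int.gcd z (y ^ 2) = 1 := by
        apply Int.isCoprime_iff_gcd_eq_one.mp
        have h1 : IsCoprime (x ^ 4) y := hxy.pow_left
        have h2 : IsCoprime (x ^ 4 + y * (-(y ^ 3))) y := h1.add_mul_left_left _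
        have h3 : z ^ 2 = x ^ 4 + y * (-(y ^ 3)) := by linarith
        rw [← h3] at h2
        exact ((IsCoprime.pow_left_iff (by norm_num)).mp h2).pow_right
      obtain ⟨m, nn, hP, hQ, hX, hMN, hpar, hM0⟩ :=
        PythagoreanTriple.coprime_classification' ht hcop hzodd (by positivity)
      have hmn0 : 2 * m * nn ≠ 0 := by
        rw [← hQ]; positivity
      have hmnpos : 0 < m * nn := by
        have : 0 < 2 * m * nn := by
          rcases (lt_or_eq_of_le (by positivity : (0:ℤ) ≤ y ^ 2 )) with h | h
          · rw [hQ] at h; exact h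
          · exfalso; exact (by positivity : (0:ℤ) < y ^ 2).ne (hQ ▸ h) -- fix later
        linarith
      have hmpos : 0 < m := by
        rcases hM0.lt_or_eq with h | h
        · exact h
        · exfalso; rw [← h] at hmnpos; simp at hmnpos
      have hnpos : 0 < nn := by nlinarith
      obtain ⟨y1, hy1⟩ : ∃ y1, y = 2 * y1 := ⟨y / 2, by omega⟩
      have hcmn : IsCoprime m nn := Int.isCoprime_iff_gcd_eq_one.mpr hMN
      rcases hpar with ⟨hm2, hn2⟩ | ⟨hm2, hn2⟩
      · -- m even, nn odd
        obtain ⟨k, hk⟩ : ∃ k, m = 2 * k := ⟨m / 2, by omega⟩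
        have hkn : k * nn = y1 ^ 2 := by
          have : y ^ 2 = 2 * m * nn := hQ
          rw [hy1, hk] at this
          linarith
        have hkpos : 0 < k := by omega
        have hck : IsCoprime k nn := by
          rw [hk] at hcmn
          exact IsCoprime.of_mul_left_right hcmn
        obtain ⟨u, hupos, hu⟩ := sq_of_coprime_pos hck hkn hkpos
        obtain ⟨v, hvpos, hv⟩ :=
          sq_of_coprime_pos hck.symm (by linarith : nn * k = y1 ^ 2) hnpos
        have ht2 : PythagoreanTriple nn m x := by
          show nn * nn + m * m = x * x
          have : x ^ 2 = m ^ 2 + nn ^ 2 := hX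
          linarith
        have hcop2 : Int.gcd nn m = 1 := by rwa [Int.gcd_comm]
        obtain ⟨r, s, w, hr, hs, hw, heq2, hlt⟩ :=
          even_case_helper nn m x hx hn2 hcop2 ht2
            ⟨u, by rw [hk, hu]⟩ (by omega) ⟨v, hv⟩
        exact ih r.natAbs hlt r s w rfl hr hs hw heq2
      · -- m odd, nn even
        obtain ⟨k, hk⟩ : ∃ k, nn = 2 * k := ⟨nn / 2, by omega⟩
        have hkn : m * k = y1 ^ 2 := by
          have : y ^ 2 = 2 * m * nn := hQ
          rw [hy1, hk] at this
          linarith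
        have hkpos : 0 < k := by omega
        have hck : IsCoprime m k := by
          rw [hk] at hcmn
          exact IsCoprime.of_mul_right_right hcmn
        obtain ⟨u, hupos, hu⟩ := sq_of_coprime_pos hck hkn hmpos
        obtain ⟨v, hvpos, hv⟩ :=
          sq_of_coprime_pos hck.symm (by linarith : k * m = y1 ^ 2) hkpos
        have ht2 : PythagoreanTriple m nn x := by
          show m * m + nn * nn = x * x
          have : x ^ 2 = m ^ 2 + nn ^ 2 := hX
          linarith
        obtain ⟨r, s, w, hr, hs, hw, heq2, hlt⟩ :=
          even_case_helper m nn x hx hm2 hMN ht2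
            ⟨v, by rw [hk, hv]⟩ (by omega) ⟨u, hu⟩
        exact ih r.natAbs hlt r s w rfl hr hs hw heq2
    · -- y odd
      have ht : PythagoreanTriple (y ^ 2) z (x ^ 2) := by
        show y ^ 2 * y ^ 2 + z * z = x ^ 2 * x ^ 2
        linear_combination -heq
      have hy2odd : y ^ 2 % 2 = 1 := by
        have : Odd (y ^ 2) := (Int.odd_iff.mpr hy2).pow
        exact Int.odd_iff.mp this
      have hcop : Int.gcd (y ^ 2) z = 1 := by
        apply Int.isCoprime_iff_gcd_eq_one.mp
        have h1 : IsCoprime y (x ^ 4) := hxy.symm.pow_right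
        have h2 : IsCoprime y (x ^ 4 + y * (-(y ^ 3))) := h1.add_mul_left_right _
        have h3 : z ^ 2 = x ^ 4 + y * (-(y ^ 3)) := by linarith
        rw [← h3] at h2
        exact IsCoprime.pow_left ((IsCoprime.pow_right_iff (by norm_num)).mp h2)
      obtain ⟨m, nn, hP, hQ, hX, hMN, _hpar, hM0⟩ :=
        PythagoreanTriple.coprime_classification' ht hcop hy2odd (by positivity)
      have hn0 : nn ≠ 0 := by
        rintro rfl
        rw [mul_zero] at hQ
        exact hz hQ
      have hm0 : m ≠ 0 := by
        rintro rfl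
        have : y ^ 2 = -(nn ^ 2) := by linarith [hP]
        nlinarith [sq_pos_of_ne_zero hy.ne', sq_nonneg nn]
      have hmpos : 0 < m := hM0.lt_of_ne (Ne.symm hm0)
      have habs : |nn| ^ 4 = nn ^ 4 := by
        rw [(by ring : |nn| ^ 4 = (|nn| ^ 2) ^ 2), sq_abs]; ring
      have heq2 : m ^ 4 = |nn| ^ 4 + (x * y) ^ 2 := by
        rw [habs]
        have hA : y ^ 2 = m ^ 2 - nn ^ 2 := hP
        have hB : x ^ 2 = m ^ 2 + nn ^ 2 := hX
        nlinarith [hA, hB]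
      refine ih m.natAbs ?_ m |nn| (x * y) rfl hmpos (by positivity) (by positivity) heq2
      apply natAbs_lt_of_sq_lt
      have hB : x ^ 2 = m ^ 2 + nn ^ 2 := hX
      nlinarith [sq_pos_of_ne_zero hn0]

theorem stmt_10 (a b : ℤ) (hb : 0 < b) (hab : b < a) :
    ¬ ∃ c : ℤ, a ^ 4 - b ^ 4 = c ^ 2 := by
  rintro ⟨c, hc⟩
  have ha : 0 < a := hb.trans hab
  have hc0 : c ≠ 0 := by
    rintro rfl
    simp at hc
    have h4 : b ^ 4 < a ^ 4 := pow_lt_pow_left₀ hab hb.le (by norm_num)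
    linarith
  exact descent a.natAbs a b c rfl ha hb hc0 (by linarith)
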